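/- Let n ≥ 0 be a natural number and x a nonzero real number. Then e^{−x} · x^{n+1} · [the n-th iterated derivative of y ↦ e^y/y^{n+1}, evaluated at y = x] equals Σ_{k=0}^{n} ((n+k)!/((n−k)!·k!)) · (−1/x)^k, i.e. it equals the Bessel polynomial B_n evaluated at −2/x. (Novel Rodrigues-type representation of the Bessel polynomials.) -/

import Mathlib

open Real Finset

noncomputable def A (n k : ℕ) : ℝ := (-1)^k * ((n+k).factorial : ℝ) / (n.factorial : ℝ)

lemma A_succ (n k : ℕ) : A n (k+1) = -((n:ℝ)+1+k) * A n k := by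
  have h : (n.factorial : ℝ) ≠ 0 := Nat.cast_ne_zero.mpr n.factorial_ne_zero
  simp only [A]
  have : ((n + (k+1)).factorial : ℝ) = ((n:ℝ)+k+1) * ((n+k).factorial : ℝ) := by
    have h2 : n + (k+1) = (n+k) + 1 := by ring
    rw [h2, Nat.factorial_succ]; push_cast; ring
  rw [this]; field_simp; ring

lemma pascal_sum (m : ℕ) (b : ℕ → ℝ) :
    (∑ k ∈ range (m+1), (m.choose k : ℝ) * b k) +
      ∑ k ∈ range (m+1), (m.choose k : ℝ) * b (k+1)
    = ∑ k ∈ range (m+2), ((m+1).choose k : ℝ) * b k := by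
  rw [Finset.sum_range_succ' (fun k => ((m+1).choose k : ℝ) * b k) (m+1),
      Finset.sum_range_succ' (fun k => ((m).choose k : ℝ) * b k) m]
  have h : ∑ k ∈ range (m+1), ((m+1).choose (k+1) : ℝ) * b (k+1) =
      ∑ k ∈ range (m+1), ((m.choose k : ℝ) * b (k+1) + (m.choose (k+1) : ℝ) * b (k+1)) := by
    apply Finset.sum_congr rfl
    intro k _
    rw [Nat.choose_succ_succ]
    push_cast; ring
  rw [h, Finset.sum_add_distrib,
      Finset.sum_range_succ (fun k => ((m.choose (k+1)) : ℝ) * b (k+1)) m]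
  simp [Nat.choose_succ_self]
  ring

lemma key (n m : ℕ) : ∀ y : ℝ, y ≠ 0 →
    iteratedDeriv m (fun z : ℝ => Real.exp z * z ^ (-((n:ℤ)+1))) y =
    Real.exp y * ∑ k ∈ range (m+1),
      (m.choose k : ℝ) * A n k * y ^ (-((n:ℤ)+1+k)) := by
  induction m with
  | zero =>
      intro y hy
      have h : (n.factorial : ℝ) ≠ 0 := Nat.cast_ne_zero.mpr n.factorial_ne_zero
      simp [A, iteratedDeriv_zero, div_self h]
  | succ m ih =>
      intro y hy
      have hmem : {z : ℝ | z ≠ 0} ∈ nhds y := isOpen_ne.mem_nhds hy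
      have hEq : iteratedDeriv m (fun z : ℝ => Real.exp z * z ^ (-((n:ℤ)+1)))
          =ᶠ[nhds y] (fun z => Real.exp z * ∑ k ∈ range (m+1),
            (m.choose k : ℝ) * A n k * z ^ (-((n:ℤ)+1+k))) :=
        Filter.eventuallyEq_of_mem hmem (fun z hz => ih z hz)
      rw [iteratedDeriv_succ, hEq.deriv_eq]
      have hsum := HasDerivAt.fun_sum (fun k (_ : k ∈ range (m+1)) =>
        (hasDerivAt_zpow (-((n:ℤ)+1+k)) y (Or.inl hy)).const_mul ((m.choose k : ℝ) * A n k))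
      have hd := (Real.hasDerivAt_exp y).fun_mul hsum
      have h2 : ∑ i ∈ range (m+1), (m.choose i : ℝ) * A n i *
            (((-((n:ℤ)+1+i) : ℤ) : ℝ) * y ^ (-((n:ℤ)+1+i) - 1)) =
          ∑ i ∈ range (m+1), (m.choose i : ℝ) *
            (A n (i+1) * y ^ (-((n:ℤ)+1+((i+1 : ℕ) : ℤ)))) := by
        apply Finset.sum_congr rfl
        intro i _
        rw [A_succ, show (-((n:ℤ)+1+i) - 1) = -((n:ℤ)+1+((i+1 : ℕ) : ℤ)) from by push_cast; ring]
        push_cast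
        ring
      have e1 : ∑ k ∈ range (m+1), (m.choose k : ℝ) * A n k * y ^ (-((n:ℤ)+1+k)) =
          ∑ k ∈ range (m+1), (m.choose k : ℝ) * (A n k * y ^ (-((n:ℤ)+1+k))) := by
        apply Finset.sum_congr rfl; intros; ring
      rw [hd.deriv, h2, ← mul_add, e1,
        pascal_sum m (fun k => A n k * y ^ (-((n:ℤ)+1+(k:ℤ))))]
      congr 1
      exact Finset.sum_congr rfl (fun k _ => by ring)

theorem bessel_novel_representation (n : ℕ) (x : ℝ) (hx : x ≠ 0) :
    Real.exp (-x) * x ^ (n + 1) *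
        iteratedDeriv n (fun y : ℝ => Real.exp y / y ^ (n + 1)) x =
      ∑ k ∈ Finset.range (n + 1),
        (((n + k).factorial : ℝ) / (((n - k).factorial : ℝ) * (k.factorial : ℝ))) *
          (-1 / x) ^ k := by
  have hf : (fun y : ℝ => Real.exp y / y ^ (n + 1)) =
      (fun z : ℝ => Real.exp z * z ^ (-((n:ℤ)+1))) := by
    funext y
    have h : (-((n:ℤ)+1)) = -((n+1 : ℕ) : ℤ) := by push_cast; ring
    rw [h, zpow_neg, zpow_natCast, div_eq_mul_inv]
  rw [hf, key n n x hx]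
  rw [Finset.mul_sum, Finset.mul_sum]
  apply Finset.sum_congr rfl
  intro k hk
  have hk' : k ≤ n := Nat.lt_succ_iff.mp (Finset.mem_range.mp hk)
  have hfac : (n.choose k : ℝ) * A n k =
      ((n + k).factorial : ℝ) / (((n - k).factorial : ℝ) * (k.factorial : ℝ)) * (-1)^k := by
    have hc := Nat.choose_mul_factorial_mul_factorial hk'
    have hcR : (n.choose k : ℝ) * (k.factorial : ℝ) * ((n-k).factorial : ℝ) = (n.factorial : ℝ) := by
      exact_mod_cast congrArg (Nat.cast : ℕ → ℝ) hc
    have h1 : ((n-k).factorial : ℝ) ≠ 0 := Nat.cast_ne_zero.mpr (Nat.factorial_ne_zero _)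
    have h2 : (k.factorial : ℝ) ≠ 0 := Nat.cast_ne_zero.mpr (Nat.factorial_ne_zero _)
    have h3 : (n.factorial : ℝ) ≠ 0 := Nat.cast_ne_zero.mpr (Nat.factorial_ne_zero _)
    simp only [A]
    field_simp
    linear_combination hcR
  have hpow : x ^ (n+1) * x ^ (-((n:ℤ)+1+k)) = (x⁻¹)^k := by
    rw [← zpow_natCast x (n+1), ← zpow_add₀ hx]
    rw [show ((n+1 : ℕ) : ℤ) + (-((n:ℤ)+1+k)) = -(k:ℤ) from by push_cast; ring]
    rw [zpow_neg, zpow_natCast, inv_pow]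
  have hneg : (-1/x : ℝ) = -1 * x⁻¹ := by ring
  rw [hneg, mul_pow]
  rw [show Real.exp (-x) * x^(n+1) * (Real.exp x * ((n.choose k:ℝ) * A n k * x ^ (-((n:ℤ)+1+k))))
      = (Real.exp (-x) * Real.exp x) * ((n.choose k:ℝ) * A n k) * (x^(n+1) * x ^ (-((n:ℤ)+1+k))) from by ring]
  rw [← Real.exp_add, neg_add_cancel, Real.exp_zero, one_mul, hpow, hfac]
  ring
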